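/- Let G be a totally disconnected locally compact group, φ : G → G a topological automorphism, and U an open compact subgroup. Then H_top(φ,U) = log [φ⁻¹(C(φ,U)) : C(φ,U)] + log Δ(φ), where C(φ,U) = ⋂_{n≥0} φ^{-n}(U). -/

import Mathlib

open Filter Topology MeasureTheory

variable {G : Type*} [Group G]

/-- The `n`-th `φ`-cotrajectory `Cₙ(φ,U) = ⋂_{i<n} φ^{-i}(U)`. -/
def cotrajN (φ : MulAut G) (U : Subgroup G) (n : ℕ) : Subgroup G :=
  ⨅ i ∈ Finset.range n, Subgroup.comap (φ ^ i).toMonoidHom U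

/-- `cₙ = [U : Cₙ(φ,U)]`. -/
noncomputable def entIdx (φ : MulAut G) (U : Subgroup G) (n : ℕ) : ℕ :=
  (cotrajN φ U n).relIndex U

/-- The topological entropy of `φ` with respect to `U`,
`H_top(φ,U) = lim_n log cₙ / n` (the limit exists, so it equals the `limsup`). -/
noncomputable def Htop (φ : MulAut G) (U : Subgroup G) : ℝ :=
  limsup (fun n : ℕ => Real.log (entIdx φ U n) / n) atTop

/-- The `φ`-cotrajectory `C(φ,U) = ⋂_{n≥0} φ^{-n}(U)`. -/
def cotraj (φ : MulAut G) (U : Subgroup G) : Subgroup G :=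
  ⨅ n : ℕ, Subgroup.comap (φ ^ n).toMonoidHom U

/-- The topological entropy `h_top(φ) = sup {H_top(φ,U) : U open compact subgroup}`. -/
noncomputable def htop [TopologicalSpace G] (φ : MulAut G) : EReal :=
  ⨆ (U : Subgroup G) (_ : IsOpen (U : Set G) ∧ IsCompact (U : Set G)), ((Htop φ U : ℝ) : EReal)

section auxiliary

open Pointwise

lemma mem_cotrajN' {φ : MulAut G} {U : Subgroup G} {n : ℕ} {x : G} :
    x ∈ cotrajN φ U n ↔ ∀ i < n, (φ ^ i) x ∈ U := by
  simp [cotrajN, Subgroup.mem_iInf, Subgroup.mem_comap]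

lemma mem_cotraj' {φ : MulAut G} {U : Subgroup G} {x : G} :
    x ∈ cotraj φ U ↔ ∀ i, (φ ^ i) x ∈ U := by
  simp [cotraj, Subgroup.mem_iInf, Subgroup.mem_comap]

lemma cotrajN_succ' (φ : MulAut G) (U : Subgroup G) (n : ℕ) :
    cotrajN φ U (n + 1) = U ⊓ (cotrajN φ U n).comap φ.toMonoidHom := by
  ext x
  simp only [mem_cotrajN', Subgroup.mem_inf, Subgroup.mem_comap, MulEquiv.coe_toMonoidHom]
  constructor
  · intro h
    refine ⟨by simpa using h 0 (by omega), fun i hi => ?_⟩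
    have := h (i + 1) (by omega)
    rwa [pow_succ, MulAut.mul_apply] at this
  · rintro ⟨h0, h⟩ i hi
    cases i with
    | zero => simpa using h0
    | succ j => rw [pow_succ, MulAut.mul_apply]; exact h j (by omega)

lemma cotrajN_antitone' (φ : MulAut G) (U : Subgroup G) : Antitone (cotrajN φ U) := by
  intro m n hmn x hx
  rw [mem_cotrajN'] at hx ⊢
  exact fun i hi => hx i (lt_of_lt_of_le hi hmn)

lemma cotraj_le_cotrajN' (φ : MulAut G) (U : Subgroup G) (n : ℕ) :
    cotraj φ U ≤ cotrajN φ U n := fun x hx => mem_cotrajN'.mpr fun i _ => mem_cotraj'.mp hx i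

lemma cotrajN_le_U' (φ : MulAut G) (U : Subgroup G) {n : ℕ} (hn : 1 ≤ n) :
    cotrajN φ U n ≤ U := fun x hx => by simpa using mem_cotrajN'.mp hx 0 hn

lemma cotraj_le_U' (φ : MulAut G) (U : Subgroup G) : cotraj φ U ≤ U :=
  fun x hx => by simpa using mem_cotraj'.mp hx 0

lemma cotraj_le_comap' (φ : MulAut G) (U : Subgroup G) :
    cotraj φ U ≤ (cotraj φ U).comap φ.toMonoidHom := by
  intro x hx
  simp only [Subgroup.mem_comap, MulEquiv.coe_toMonoidHom, mem_cotraj'] at *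
  intro i
  have := hx (i + 1)
  rwa [pow_succ, MulAut.mul_apply] at this

lemma mem_cotraj_of_mem_comap' {φ : MulAut G} {U : Subgroup G} {x : G}
    (hD : x ∈ (cotraj φ U).comap φ.toMonoidHom) (hU : x ∈ U) : x ∈ cotraj φ U := by
  simp only [Subgroup.mem_comap, MulEquiv.coe_toMonoidHom, mem_cotraj'] at *
  intro i
  cases i with
  | zero => simpa using hU
  | succ j => rw [pow_succ, MulAut.mul_apply]; exact hD j

variable [TopologicalSpace G] [IsTopologicalGroup G]

omit [IsTopologicalGroup G] in
lemma continuous_pow_aut' (φ : MulAut G) (hφ : Continuous φ) (n : ℕ) : Continuous ⇑(φ ^ n) := by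
  induction n with
  | zero => simpa [pow_zero] using continuous_id
  | succ k ih =>
      have : ⇑(φ ^ (k + 1)) = ⇑(φ ^ k) ∘ ⇑φ := by
        funext x; simp [pow_succ, MulAut.mul_apply]
      rw [this]; exact ih.comp hφ

omit [IsTopologicalGroup G] in
lemma isOpen_cotrajN' {φ : MulAut G} {U : Subgroup G} (hφ : Continuous φ)
    (hUo : IsOpen (U : Set G)) (n : ℕ) : IsOpen ((cotrajN φ U n : Subgroup G) : Set G) := by
  induction n with
  | zero =>
      have : cotrajN φ U 0 = ⊤ := by ext x; simp [mem_cotrajN']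
      rw [this]; simpa using isOpen_univ
  | succ k ih =>
      rw [cotrajN_succ', Subgroup.coe_inf, Subgroup.coe_comap]
      exact hUo.inter (ih.preimage hφ)

lemma isClosed_cotrajN' {φ : MulAut G} {U : Subgroup G} (hφ : Continuous φ)
    (hUo : IsOpen (U : Set G)) (n : ℕ) : IsClosed ((cotrajN φ U n : Subgroup G) : Set G) := by
  have hUcl : IsClosed (U : Set G) := U.isClosed_of_isOpen hUo
  induction n with
  | zero =>
      have : cotrajN φ U 0 = ⊤ := by ext x; simp [mem_cotrajN']
      rw [this]; simp
  | succ k ih =>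
      rw [cotrajN_succ', Subgroup.coe_inf, Subgroup.coe_comap]
      exact hUcl.inter (ih.preimage hφ)

lemma isClosed_cotraj' {φ : MulAut G} {U : Subgroup G} (hφ : Continuous φ)
    (hUo : IsOpen (U : Set G)) : IsClosed ((cotraj φ U : Subgroup G) : Set G) := by
  have : ((cotraj φ U : Subgroup G) : Set G) = ⋂ n, ⇑(φ ^ n) ⁻¹' (U : Set G) := by
    ext x; simp [mem_cotraj', SetLike.mem_coe]
  rw [this]
  exact isClosed_iInter fun n =>
    (U.isClosed_of_isOpen hUo).preimage (continuous_pow_aut' φ hφ n)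

lemma relindex_ne_zero_aux' (H K : Subgroup G) (hK : IsCompact (K : Set G))
    (hHrel : IsOpen ((Subtype.val : K → G) ⁻¹' (H : Set G))) : H.relIndex K ≠ 0 := by
  haveI : CompactSpace K := isCompact_iff_compactSpace.mp hK
  haveI : Finite (K ⧸ H.subgroupOf K) := by
    apply Subgroup.quotient_finite_of_isOpen (H.subgroupOf K)
    have : ((H.subgroupOf K : Subgroup K) : Set K) = (Subtype.val : K → G) ⁻¹' (H : Set G) := by
      ext x; simp [Subgroup.mem_subgroupOf]
    rw [this]; exact hHrel
  exact Subgroup.index_ne_zero_of_finite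

/-- An open subgroup of finite Haar measure in a locally compact group is compact. -/
lemma isCompact_of_finite_measure' [LocallyCompactSpace G] [MeasurableSpace G] [BorelSpace G]
    (μ : Measure G) [μ.IsMulLeftInvariant] [μ.IsOpenPosMeasure]
    (H : Subgroup G) (hHo : IsOpen (H : Set G)) (hfin : μ (H : Set G) ≠ ⊤) :
    IsCompact (H : Set G) := by
  by_contra hnc
  have hHcl : IsClosed (H : Set G) := H.isClosed_of_isOpen hHo
  haveI : LocallyCompactSpace H := hHo.locallyCompactSpace
  haveI : NoncompactSpace H :=
    not_compactSpace_iff.mp (fun hc => hnc (isCompact_iff_compactSpace.mpr hc))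
  have hemb : MeasurableEmbedding (Subtype.val : H → G) :=
    MeasurableEmbedding.subtype_coe hHcl.measurableSet
  haveI : BorelSpace H := Subtype.borelSpace (H : Set G)
  set ν : Measure H := μ.comap Subtype.val with hν
  haveI : ν.IsMulLeftInvariant := by
    constructor
    intro h
    ext s hs
    rw [Measure.map_apply (measurable_const_mul h) hs, hemb.comap_apply, hemb.comap_apply]
    have himg : (Subtype.val '' ((h * ·) ⁻¹' s) : Set G)
        = ((h : G) * ·) ⁻¹' (Subtype.val '' s) := by
      ext x
      constructor
      · rintro ⟨y, hy, rfl⟩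
        exact ⟨h * y, hy, rfl⟩
      · rintro ⟨y, hy, hxy⟩
        refine ⟨h⁻¹ * y, ?_, ?_⟩
        · show h * (h⁻¹ * y) ∈ s
          simpa [mul_inv_cancel_left] using hy
        · show ((h⁻¹ * y : H) : G) = x
          push_cast
          simp only [hxy]
          exact inv_mul_cancel_left _ _
    rw [himg, measure_preimage_mul]
  haveI : ν.IsOpenPosMeasure := by
    constructor
    intro V hVo hVne
    rw [hemb.comap_apply]
    exact (hHo.isOpenEmbedding_subtypeVal.isOpenMap _ hVo).measure_ne_zero μ (hVne.image _)
  have := measure_univ_of_isMulLeftInvariant ν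
  rw [hemb.comap_apply, Set.image_univ, Subtype.range_coe] at this
  exact hfin this

end auxiliary

set_option linter.deprecated false in
/-- Key coset-counting measure lemma: if `C ≤ D` realizes inside `D` the trace of `V`,
`D ≤ E` and `E ⊆ D·V`, then `μ(E) = [D:C]·μ(E ∩ V)`. -/
lemma meas_cover' [MeasurableSpace G] [MeasurableMul G]
    (μ : Measure G) [μ.IsMulLeftInvariant]
    (C D V E : Subgroup G) (hCD : C ≤ D)
    (hC : ∀ x ∈ D, (x ∈ C ↔ x ∈ V)) (hDE : D ≤ E)
    (hcov : ∀ e ∈ E, ∃ d ∈ D, d⁻¹ * e ∈ V)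
    (hfin : C.relIndex D ≠ 0)
    (hm : MeasurableSet ((E : Set G) ∩ V)) :
    μ (E : Set G) = (C.relIndex D) * μ ((E : Set G) ∩ V) := by
  set Q := D ⧸ C.subgroupOf D with hQ
  have hcard : Nat.card Q = C.relIndex D := rfl
  haveI : Finite Q := Nat.finite_of_card_ne_zero (by rw [hcard]; exact hfin)
  haveI : Fintype Q := Fintype.ofFinite Q
  set A : Set G := (E : Set G) ∩ V with hA
  set r : Q → G := fun q => ((Quotient.out q : D) : G) with hr
  have hrD : ∀ q, r q ∈ D := fun q => (Quotient.out q).2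
  have hmk : ∀ d : D, (r (QuotientGroup.mk d))⁻¹ * (d : G) ∈ C := by
    intro d
    have h1 : (QuotientGroup.mk (Quotient.out (QuotientGroup.mk d : Q)) : Q)
        = QuotientGroup.mk d := QuotientGroup.out_eq' _
    rw [QuotientGroup.eq] at h1
    have := Subgroup.mem_subgroupOf.mp h1
    simpa using this
  have hCV : ∀ x ∈ C, x ∈ V := fun x hx => (hC x (hCD hx)).mp hx
  set f : Q → Set G := fun q => (fun x => (r q)⁻¹ * x) ⁻¹' A with hf
  have hmem : ∀ q x, x ∈ f q ↔ ((r q)⁻¹ * x ∈ E ∧ (r q)⁻¹ * x ∈ V) := by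
    intro q x; simp [hf, hA, Set.mem_preimage, SetLike.mem_coe]
  have hunion : (E : Set G) = ⋃ q ∈ Finset.univ, f q := by
    ext e
    simp only [Set.mem_iUnion, Finset.mem_univ, exists_prop, true_and, SetLike.mem_coe]
    constructor
    · intro he
      obtain ⟨d, hd, hdV⟩ := hcov e he
      refine ⟨QuotientGroup.mk ⟨d, hd⟩, ?_⟩
      rw [hmem]
      have hc := hmk ⟨d, hd⟩
      set q := (QuotientGroup.mk (⟨d, hd⟩ : D) : Q)
      constructor
      · exact E.mul_mem (E.inv_mem (hDE (hrD q))) he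
      · have : (r q)⁻¹ * e = ((r q)⁻¹ * d) * (d⁻¹ * e) := by group
        rw [this]
        exact V.mul_mem (hCV _ hc) hdV
    · rintro ⟨q, hq⟩
      rw [hmem] at hq
      have : e = (r q) * ((r q)⁻¹ * e) := by group
      rw [this]
      exact E.mul_mem (hDE (hrD q)) hq.1
  have hdisj : ((Finset.univ : Finset Q) : Set Q).PairwiseDisjoint f := by
    intro q _ q' _ hne
    refine Set.disjoint_left.mpr fun y hy hy' => hne ?_
    rw [hmem] at hy hy'
    have hu : (r q)⁻¹ * r q' ∈ V := by
      have : (r q)⁻¹ * r q' = ((r q)⁻¹ * y) * ((r q')⁻¹ * y)⁻¹ := by group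
      rw [this]
      exact V.mul_mem hy.2 (V.inv_mem hy'.2)
    have hd : (r q)⁻¹ * r q' ∈ D := D.mul_mem (D.inv_mem (hrD q)) (hrD q')
    have hc : (r q)⁻¹ * r q' ∈ C := (hC _ hd).mpr hu
    have h1 : (QuotientGroup.mk (Quotient.out q : D) : Q)
        = QuotientGroup.mk (Quotient.out q' : D) := by
      rw [QuotientGroup.eq, Subgroup.mem_subgroupOf]
      simpa using hc
    rwa [QuotientGroup.out_eq', QuotientGroup.out_eq'] at h1
  have hmes : ∀ q ∈ Finset.univ, MeasurableSet (f q) :=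
    fun q _ => hm.preimage (measurable_const_mul _)
  have hμ : ∀ q, μ (f q) = μ A := fun q => measure_preimage_mul μ _ _
  calc μ (E : Set G) = μ (⋃ q ∈ Finset.univ, f q) := by rw [← hunion]
    _ = ∑ q ∈ Finset.univ, μ (f q) := measure_biUnion_finset hdisj hmes
    _ = ∑ _q ∈ (Finset.univ : Finset Q), μ A := by simp [hμ]
    _ = (Nat.card Q) * μ A := by
        rw [Finset.sum_const, Finset.card_univ, Nat.card_eq_fintype_card, nsmul_eq_mul]
    _ = (C.relIndex D) * μ A := by rw [hcard]

theorem limit_free_formula_with_modulus [TopologicalSpace G] [IsTopologicalGroup G]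
    [LocallyCompactSpace G] [TotallyDisconnectedSpace G] [MeasurableSpace G] [BorelSpace G]
    (μ : Measure G) [μ.IsHaarMeasure]
    (φ : MulAut G) (hφ : Continuous φ) (hφ' : Continuous φ⁻¹)
    (Δ : ℝ) (hΔ : 0 < Δ) (hmod : ∀ s : Set G, μ (⇑φ '' s) = ENNReal.ofReal Δ * μ s)
    (U : Subgroup G) (hUo : IsOpen (U : Set G)) (hUc : IsCompact (U : Set G)) :
    Htop φ U =
      Real.log ((cotraj φ U).relIndex (Subgroup.comap φ.toMonoidHom (cotraj φ U))) +
        Real.log Δ := by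
  classical
  open Pointwise in
  set C := cotraj φ U with hCdef
  set D := (cotraj φ U).comap φ.toMonoidHom with hDdef
  set s := C.relIndex D with hsdef
  have hDset : (D : Set G) = ⇑φ ⁻¹' (C : Set G) := by
    rw [hDdef, Subgroup.coe_comap]; rfl
  have hUcl : IsClosed (U : Set G) := U.isClosed_of_isOpen hUo
  -- measures
  have hμU0 : μ (U : Set G) ≠ 0 := hUo.measure_ne_zero μ ⟨1, U.one_mem⟩
  have hμUt : μ (U : Set G) ≠ ⊤ := hUc.measure_lt_top.ne
  -- modulus
  have hmod' : ∀ t : Set G, μ t = ENNReal.ofReal Δ * μ (⇑φ ⁻¹' t) := by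
    intro t
    have := hmod (⇑φ ⁻¹' t)
    rwa [Set.image_preimage_eq t (MulEquiv.surjective φ)] at this
  have hΔ0 : ENNReal.ofReal Δ ≠ 0 := by simp [ENNReal.ofReal_eq_zero, not_le, hΔ]
  -- φ⁻¹(U) is compact
  have hφUset : ((Subgroup.comap φ.toMonoidHom U : Subgroup G) : Set G)
      = ⇑φ ⁻¹' (U : Set G) := by rw [Subgroup.coe_comap]; rfl
  have hμpre : μ (⇑φ ⁻¹' (U : Set G)) ≠ ⊤ := by
    intro h
    exact hμUt (by rw [hmod' (U : Set G), h, ENNReal.mul_top hΔ0])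
  have hφU : IsCompact (⇑φ ⁻¹' (U : Set G)) := by
    rw [← hφUset]
    exact isCompact_of_finite_measure' μ (Subgroup.comap φ.toMonoidHom U)
      (by rw [hφUset]; exact hUo.preimage hφ) (by rw [hφUset]; exact hμpre)
  -- D is compact
  have hDcl : IsClosed (D : Set G) := by
    rw [hDset]; exact (isClosed_cotraj' hφ hUo).preimage hφ
  have hDsub : (D : Set G) ⊆ ⇑φ ⁻¹' (U : Set G) := by
    rw [hDset]; exact Set.preimage_mono (SetLike.coe_subset_coe.mpr (cotraj_le_U' φ U))
  have hDc : IsCompact (D : Set G) := IsCompact.of_isClosed_subset hφU hDcl hDsub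
  -- s ≠ 0
  have hCiff : ∀ x ∈ D, (x ∈ C ↔ x ∈ U) :=
    fun x hx => ⟨fun h => cotraj_le_U' φ U h, fun h => mem_cotraj_of_mem_comap' hx h⟩
  have hsne : s ≠ 0 := by
    apply relindex_ne_zero_aux' C D hDc
    have : ((Subtype.val : D → G) ⁻¹' (C : Set G))
        = (Subtype.val : D → G) ⁻¹' (U : Set G) := by
      ext x
      simp only [Set.mem_preimage, SetLike.mem_coe]
      exact hCiff x x.2
    rw [this]
    exact hUo.preimage continuous_subtype_val
  -- entIdx ≠ 0
  have hcne : ∀ n, 1 ≤ n → entIdx φ U n ≠ 0 := by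
    intro n hn
    apply relindex_ne_zero_aux' _ U hUc
    exact (isOpen_cotrajN' hφ hUo n).preimage continuous_subtype_val
  have hμCn0 : ∀ n, μ ((cotrajN φ U n : Subgroup G) : Set G) ≠ 0 :=
    fun n => (isOpen_cotrajN' hφ hUo n).measure_ne_zero μ ⟨1, (cotrajN φ U n).one_mem⟩
  have hμCnt : ∀ n, 1 ≤ n → μ ((cotrajN φ U n : Subgroup G) : Set G) ≠ ⊤ := by
    intro n hn
    exact (lt_of_le_of_lt (measure_mono (SetLike.coe_subset_coe.mpr (cotrajN_le_U' φ U hn)))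
      hUc.measure_lt_top).ne
  -- index formula for U
  have hIdx : ∀ n, 1 ≤ n →
      μ (U : Set G) = (entIdx φ U n) * μ ((cotrajN φ U n : Subgroup G) : Set G) := by
    intro n hn
    have h := meas_cover' μ (cotrajN φ U n) U (cotrajN φ U n) U (cotrajN_le_U' φ U hn)
      (fun x _ => Iff.rfl) le_rfl
      (fun e he => ⟨e, he, by simpa using (cotrajN φ U n).one_mem⟩)
      (hcne n hn)
      ((hUo.measurableSet).inter (isOpen_cotrajN' hφ hUo n).measurableSet)
    rwa [Set.inter_eq_self_of_subset_right
      (SetLike.coe_subset_coe.mpr (cotrajN_le_U' φ U hn))] at h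
  -- eventual covering via compactness
  obtain ⟨N, hN1, hNcov⟩ : ∃ N, 1 ≤ N ∧ ∀ n, N ≤ n →
      ∀ e ∈ (cotrajN φ U n).comap φ.toMonoidHom, ∃ d ∈ D, d⁻¹ * e ∈ U := by
    set W : Set G := ⋃ d ∈ (D : Set G), d • (U : Set G) with hW
    have hWo : IsOpen W := isOpen_biUnion fun d _ => hUo.smul d
    have hDW : (D : Set G) ⊆ W := by
      intro d hd
      refine Set.mem_biUnion hd ?_
      rw [Set.mem_smul_set_iff_inv_smul_mem, smul_eq_mul, inv_mul_cancel]
      exact U.one_mem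
    set Z : ℕ → Set G := fun n => ⇑φ ⁻¹' ((cotrajN φ U n : Subgroup G) : Set G) with hZ
    have hZE : ∀ n, Z n = (((cotrajN φ U n).comap φ.toMonoidHom : Subgroup G) : Set G) := by
      intro n; rw [Subgroup.coe_comap]; rfl
    have hZcl : ∀ n, IsClosed (Z n) := fun n => (isClosed_cotrajN' hφ hUo n).preimage hφ
    have hZanti : ∀ m n, m ≤ n → Z n ⊆ Z m := fun m n h =>
      Set.preimage_mono (SetLike.coe_subset_coe.mpr (cotrajN_antitone' φ U h))
    have hZ1 : IsCompact (Z 1) := by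
      apply IsCompact.of_isClosed_subset hφU (hZcl 1)
      exact Set.preimage_mono (SetLike.coe_subset_coe.mpr (cotrajN_le_U' φ U le_rfl))
    have hK : IsCompact (Z 1 ∩ Wᶜ) := hZ1.inter_right (isClosed_compl_iff.mpr hWo)
    have hinter : (Z 1 ∩ Wᶜ) ∩ ⋂ n, Z n = ∅ := by
      apply Set.eq_empty_iff_forall_notMem.mpr
      rintro x ⟨⟨hx1, hxW⟩, hxall⟩
      apply hxW
      apply hDW
      rw [Set.mem_iInter] at hxall
      show x ∈ D
      rw [hDdef, Subgroup.mem_comap]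
      show φ x ∈ cotraj φ U
      rw [mem_cotraj']
      intro i
      have := hxall (i + 1)
      rw [hZ, Set.mem_preimage, SetLike.mem_coe, mem_cotrajN'] at this
      exact this i (by omega)
    obtain ⟨t, ht⟩ := hK.elim_finite_subfamily_closed Z hZcl hinter
    refine ⟨max (t.sup id) 1, le_max_right _ _, ?_⟩
    intro n hn e he
    have heZ : e ∈ Z n := by rw [hZE n]; exact he
    have heW : e ∈ W := by
      by_contra hnW
      have h1 : e ∈ Z 1 := hZanti 1 n (le_trans (le_max_right _ _) hn) heZ
      have h2 : e ∈ ⋂ m ∈ t, Z m := by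
        apply Set.mem_biInter
        intro m hm
        exact hZanti m n (le_trans (le_trans (Finset.le_sup (f := id) hm)
          (le_max_left _ _)) hn) heZ
      have : e ∈ (Z 1 ∩ Wᶜ) ∩ ⋂ m ∈ t, Z m := ⟨⟨h1, hnW⟩, h2⟩
      rw [ht] at this
      exact this
    rw [hW, Set.mem_iUnion₂] at heW
    obtain ⟨d, hd, hed⟩ := heW
    refine ⟨d, hd, ?_⟩
    rwa [Set.mem_smul_set_iff_inv_smul_mem, smul_eq_mul] at hed
  -- index formula for the D_n's
  have hIdxD : ∀ n, N ≤ n →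
      μ (⇑φ ⁻¹' ((cotrajN φ U n : Subgroup G) : Set G))
        = s * μ ((cotrajN φ U (n + 1) : Subgroup G) : Set G) := by
    intro n hn
    set E := (cotrajN φ U n).comap φ.toMonoidHom with hE
    have hEset : (E : Set G) = ⇑φ ⁻¹' ((cotrajN φ U n : Subgroup G) : Set G) := by
      rw [hE, Subgroup.coe_comap]; rfl
    have hDle : D ≤ E := Subgroup.comap_mono (cotraj_le_cotrajN' φ U n)
    have hEopen : IsOpen (E : Set G) := by
      rw [hEset]; exact (isOpen_cotrajN' hφ hUo n).preimage hφ
    have h := meas_cover' μ C D U E (cotraj_le_comap' φ U) hCiff hDle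
      (hNcov n hn) hsne (hEopen.measurableSet.inter hUo.measurableSet)
    have hinter : (E : Set G) ∩ (U : Set G)
        = ((cotrajN φ U (n + 1) : Subgroup G) : Set G) := by
      rw [cotrajN_succ', Subgroup.coe_inf, ← hE, Set.inter_comm]
    rw [hinter, hEset] at h
    exact h
  -- the multiplicative recursion, in ℝ
  have hreal : ∀ n, N ≤ n →
      ((entIdx φ U (n + 1) : ℝ)) = (entIdx φ U n : ℝ) * Δ * s := by
    intro n hn
    have hn1 : 1 ≤ n := le_trans hN1 hn
    have e1 : μ (U : Set G) = (entIdx φ U (n + 1)) *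
        μ ((cotrajN φ U (n + 1) : Subgroup G) : Set G) := hIdx (n + 1) (by omega)
    have e2 : μ (U : Set G) = ((entIdx φ U n : ℕ) : ENNReal) * ENNReal.ofReal Δ * (s : ENNReal) *
        μ ((cotrajN φ U (n + 1) : Subgroup G) : Set G) := by
      rw [hIdx n hn1, hmod' ((cotrajN φ U n : Subgroup G) : Set G), hIdxD n hn]
      ring
    have e3 : ((entIdx φ U (n + 1) : ℕ) : ENNReal)
        = ((entIdx φ U n : ℕ) : ENNReal) * ENNReal.ofReal Δ * (s : ENNReal) :=
      (ENNReal.mul_left_inj (hμCn0 (n + 1)) (hμCnt (n + 1) (by omega))).mp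
        (e1.symm.trans e2)
    have := congrArg ENNReal.toReal e3
    rwa [ENNReal.toReal_mul, ENNReal.toReal_mul, ENNReal.toReal_natCast,
      ENNReal.toReal_natCast, ENNReal.toReal_ofReal hΔ.le] at this
  -- logarithmic recursion
  set L : ℝ := Real.log s + Real.log Δ with hL
  have hlogstep : ∀ n, N ≤ n →
      Real.log (entIdx φ U (n + 1)) = Real.log (entIdx φ U n) + L := by
    intro n hn
    have hn1 : 1 ≤ n := le_trans hN1 hn
    have hc0 : (entIdx φ U n : ℝ) ≠ 0 := Nat.cast_ne_zero.mpr (hcne n hn1)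
    have hs0 : (s : ℝ) ≠ 0 := Nat.cast_ne_zero.mpr hsne
    rw [hreal n hn, Real.log_mul (mul_ne_zero hc0 hΔ.ne') hs0, Real.log_mul hc0 hΔ.ne', hL]
    ring
  have hlog : ∀ n, N ≤ n →
      Real.log (entIdx φ U n) = Real.log (entIdx φ U N) + ((n : ℝ) - N) * L := by
    intro n hn
    induction n, hn using Nat.le_induction with
    | base => simp
    | succ m hm ih =>
        rw [hlogstep m hm, ih]
        push_cast
        ring
  -- the limit
  have htend0 : Tendsto
      (fun n : ℕ => (Real.log (entIdx φ U N) - (N : ℝ) * L) * (1 / (n : ℝ)) + L)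
      atTop (𝓝 L) := by
    have h1 := tendsto_one_div_atTop_nhds_zero_nat.const_mul
      (Real.log (entIdx φ U N) - (N : ℝ) * L)
    have h2 := h1.add_const L
    simpa using h2
  have heq : (fun n : ℕ => (Real.log (entIdx φ U N) - (N : ℝ) * L) * (1 / (n : ℝ)) + L)
      =ᶠ[atTop] (fun n : ℕ => Real.log (entIdx φ U n) / n) := by
    filter_upwards [eventually_ge_atTop N] with n hn
    have hn0 : (n : ℝ) ≠ 0 := Nat.cast_ne_zero.mpr (by omega)
    rw [hlog n hn]
    field_simp
    ring
  have htend : Tendsto (fun n : ℕ => Real.log (entIdx φ U n) / n) atTop (𝓝 L) :=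
    htend0.congr' heq
  exact htend.limsup_eq
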